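/- Let ℱ = {K_1, …, K_n} be a family of convex bodies in ℝ^d, and let ℱ₁ and ℱ₂ be subfamilies with ℱ₁ ∩ ℱ₂ = ∅ and ℱ₁ ∪ ℱ₂ = ℱ. Then there is a hyperplane strictly separating ⋃ℱ₁ from ⋃ℱ₂ if and only if for every subfamily 𝒢 ⊆ ℱ of cardinality at most d+2, the set ⋃(ℱ₁ ∩ 𝒢) can be strictly separated from ⋃(ℱ₂ ∩ 𝒢) by a hyperplane. The same equivalence holds with non-strict separation in place of strict separation on both sides. -/

import Mathlib

open Set Metric
open scoped RealInnerProductSpace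

section Aux

variable {d : ℕ}

local notation "V" => EuclideanSpace ℝ (Fin d)

private lemma lin_aux (y : V) : IsLinearMap ℝ (fun p : V × ℝ => ⟪p.1, y⟫ - p.2) := by
  constructor
  · intro p q
    simp only [Prod.fst_add, Prod.snd_add, inner_add_left]
    ring
  · intro c p
    simp only [Prod.smul_fst, Prod.smul_snd, real_inner_smul_left, smul_eq_mul]
    ring

private lemma convex_lt' (y : V) : Convex ℝ {p : V × ℝ | ⟪p.1, y⟫ < p.2} := by
  have h : Convex ℝ {w : V × ℝ | ⟪w.1, y⟫ - w.2 < 0} := convex_halfSpace_lt (lin_aux y) 0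
  convert h using 1
  ext p; simp [sub_neg]

private lemma convex_gt' (y : V) : Convex ℝ {p : V × ℝ | p.2 < ⟪p.1, y⟫} := by
  have h : Convex ℝ {w : V × ℝ | 0 < ⟪w.1, y⟫ - w.2} := convex_halfSpace_gt (lin_aux y) 0
  convert h using 1
  ext p; simp [sub_pos]

private lemma convex_le' (y : V) : Convex ℝ {p : V × ℝ | ⟪p.1, y⟫ ≤ p.2} := by
  have h : Convex ℝ {w : V × ℝ | ⟪w.1, y⟫ - w.2 ≤ 0} := convex_halfSpace_le (lin_aux y) 0
  convert h using 1
  ext p; simp [sub_nonpos]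

private lemma convex_ge' (y : V) : Convex ℝ {p : V × ℝ | p.2 ≤ ⟪p.1, y⟫} := by
  have h : Convex ℝ {w : V × ℝ | 0 ≤ ⟪w.1, y⟫ - w.2} := convex_halfSpace_ge (lin_aux y) 0
  convert h using 1
  ext p; simp [sub_nonneg]

private lemma inner_lt_of_mem_interior {u : V} (hu : u ≠ 0) {S : Set V} {c : V}
    (hc : c ∈ interior S) {α : ℝ} (h : ∀ y ∈ S, ⟪u, y⟫ ≤ α) : ⟪u, c⟫ < α := by
  obtain ⟨ε, hε, hball⟩ := Metric.isOpen_iff.1 isOpen_interior c hc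
  have hn : 0 < ‖u‖ := norm_pos_iff.2 hu
  set t : ℝ := ε / (2 * ‖u‖) with ht_def
  have ht : 0 < t := by positivity
  have hmem : c + t • u ∈ S := by
    apply interior_subset
    apply hball
    rw [Metric.mem_ball, dist_eq_norm, add_sub_cancel_left, norm_smul, Real.norm_eq_abs,
      abs_of_pos ht]
    have ht2 : t * ‖u‖ = ε / 2 := by
      rw [ht_def]; field_simp
    rw [ht2]; linarith
  have h2 := h _ hmem
  rw [inner_add_right, real_inner_smul_right, real_inner_self_eq_norm_sq] at h2
  have hpos : 0 < t * ‖u‖ ^ 2 := by positivity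
  linarith

private lemma lt_inner_of_mem_interior {u : V} (hu : u ≠ 0) {S : Set V} {c : V}
    (hc : c ∈ interior S) {α : ℝ} (h : ∀ y ∈ S, α ≤ ⟪u, y⟫) : α < ⟪u, c⟫ := by
  have h' : ∀ y ∈ S, ⟪-u, y⟫ ≤ -α := fun y hy => by
    rw [inner_neg_left]; linarith [h y hy]
  have := inner_lt_of_mem_interior (neg_ne_zero.2 hu) hc h'
  rw [inner_neg_left] at this; linarith

private lemma exists_forall_lt' (u : V) {S : Set V} (hS : IsCompact S) :
    ∃ α : ℝ, ∀ y ∈ S, ⟪u, y⟫ < α := by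
  obtain ⟨C, hC⟩ := (hS.image (show Continuous fun y : V => ⟪u, y⟫ from Continuous.inner continuous_const continuous_id)).bddAbove
  exact ⟨C + 1, fun y hy => lt_of_le_of_lt (hC (Set.mem_image_of_mem _ hy)) (lt_add_one C)⟩

private lemma exists_forall_gt' (u : V) {S : Set V} (hS : IsCompact S) :
    ∃ α : ℝ, ∀ y ∈ S, α < ⟪u, y⟫ := by
  obtain ⟨α, hα⟩ := exists_forall_lt' (-u) hS
  exact ⟨-α, fun y hy => by have := hα y hy; rw [inner_neg_left] at this; linarith⟩

private lemma finrank_VR : Module.finrank ℝ (V × ℝ) = d + 1 := by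
  simp [Module.finrank_prod, finrank_euclideanSpace_fin]

private lemma back_strict {n : ℕ} {K : Fin n → Set V} (hcpt : ∀ i, IsCompact (K i))
    (hint : ∀ i, (interior (K i)).Nonempty) (I : Finset (Fin n))
    (h : ∀ G : Finset (Fin n), G.card ≤ d + 2 →
        ∃ (u : V) (α : ℝ), u ≠ 0 ∧ (∀ i ∈ I ∩ G, ∀ y ∈ K i, ⟪u, y⟫ < α) ∧
          (∀ i ∈ G \ I, ∀ y ∈ K i, α < ⟪u, y⟫)) :
    ∃ (u : V) (α : ℝ), u ≠ 0 ∧ (∀ i ∈ I, ∀ y ∈ K i, ⟪u, y⟫ < α) ∧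
      (∀ i ∉ I, ∀ y ∈ K i, α < ⟪u, y⟫) := by
  classical
  by_cases hB : ∀ i : Fin n, i ∈ I
  · obtain ⟨u, α₀, hu, -, -⟩ := h ∅ (by simp)
    obtain ⟨α, hα⟩ := exists_forall_lt' u (isCompact_iUnion hcpt)
    exact ⟨u, α, hu, fun i _ y hy => hα y (Set.mem_iUnion.2 ⟨i, hy⟩),
      fun i hi => absurd (hB i) hi⟩
  by_cases hC : ∀ i : Fin n, i ∉ I
  · obtain ⟨u, α₀, hu, -, -⟩ := h ∅ (by simp)
    obtain ⟨α, hα⟩ := exists_forall_gt' u (isCompact_iUnion hcpt)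
    exact ⟨u, α, hu, fun i hi => absurd hi (hC i),
      fun i _ y hy => hα y (Set.mem_iUnion.2 ⟨i, hy⟩)⟩
  push_neg at hB hC
  obtain ⟨i₁, hi₁⟩ := hB
  obtain ⟨i₀, hi₀⟩ := hC
  set F : Fin n → Set (V × ℝ) := fun i =>
    if i ∈ I then {p : V × ℝ | ∀ y ∈ K i, ⟪p.1, y⟫ < p.2}
    else {p : V × ℝ | ∀ y ∈ K i, p.2 < ⟪p.1, y⟫} with hF
  have hFc : ∀ i ∈ (Finset.univ : Finset (Fin n)), Convex ℝ (F i) := by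
    intro i _
    by_cases hi : i ∈ I
    · rw [hF]; simp only [if_pos hi]
      have he : {p : V × ℝ | ∀ y ∈ K i, ⟪p.1, y⟫ < p.2}
          = ⋂ y ∈ K i, {p : V × ℝ | ⟪p.1, y⟫ < p.2} := by ext p; simp
      rw [he]
      exact convex_iInter₂ fun y _ => convex_lt' y
    · rw [hF]; simp only [if_neg hi]
      have he : {p : V × ℝ | ∀ y ∈ K i, p.2 < ⟪p.1, y⟫}
          = ⋂ y ∈ K i, {p : V × ℝ | p.2 < ⟪p.1, y⟫} := by ext p; simp
      rw [he]
      exact convex_iInter₂ fun y _ => convex_gt' y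
  have hFi : ∀ J ⊆ Finset.univ, J.card ≤ Module.finrank ℝ (V × ℝ) + 1 →
      (⋂ i ∈ J, F i).Nonempty := by
    intro J _ hJ
    rw [finrank_VR] at hJ
    obtain ⟨u, α, hu, h1, h2⟩ := h J (by omega)
    refine ⟨(u, α), Set.mem_biInter fun i hi => ?_⟩
    by_cases hiI : i ∈ I
    · rw [hF]; simp only [if_pos hiI]
      exact fun y hy => h1 i (Finset.mem_inter.2 ⟨hiI, hi⟩) y hy
    · rw [hF]; simp only [if_neg hiI]
      exact fun y hy => h2 i (Finset.mem_sdiff.2 ⟨hi, hiI⟩) y hy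
  obtain ⟨p, hp⟩ := Convex.helly_theorem' hFc hFi
  have hmem : ∀ i, p ∈ F i := fun i => Set.mem_iInter₂.1 hp i (Finset.mem_univ i)
  have h1 : ∀ i ∈ I, ∀ y ∈ K i, ⟪p.1, y⟫ < p.2 := by
    intro i hi
    have := hmem i
    rw [hF] at this; simpa [if_pos hi] using this
  have h2 : ∀ i ∉ I, ∀ y ∈ K i, p.2 < ⟪p.1, y⟫ := by
    intro i hi
    have := hmem i
    rw [hF] at this; simpa [if_neg hi] using this
  refine ⟨p.1, p.2, ?_, h1, h2⟩
  intro h0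
  obtain ⟨y₀, hy₀⟩ := hint i₀
  obtain ⟨y₁, hy₁⟩ := hint i₁
  have a := h1 i₀ hi₀ y₀ (interior_subset hy₀)
  have b := h2 i₁ hi₁ y₁ (interior_subset hy₁)
  rw [h0, inner_zero_left] at a b
  linarith

private lemma back_nonstrict {n : ℕ} {K : Fin n → Set V} (hcpt : ∀ i, IsCompact (K i))
    (hint : ∀ i, (interior (K i)).Nonempty) (I : Finset (Fin n))
    (h : ∀ G : Finset (Fin n), G.card ≤ d + 2 →
        ∃ (u : V) (α : ℝ), u ≠ 0 ∧ (∀ i ∈ I ∩ G, ∀ y ∈ K i, ⟪u, y⟫ ≤ α) ∧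
          (∀ i ∈ G \ I, ∀ y ∈ K i, α ≤ ⟪u, y⟫)) :
    ∃ (u : V) (α : ℝ), u ≠ 0 ∧ (∀ i ∈ I, ∀ y ∈ K i, ⟪u, y⟫ ≤ α) ∧
      (∀ i ∉ I, ∀ y ∈ K i, α ≤ ⟪u, y⟫) := by
  classical
  by_cases hB : ∀ i : Fin n, i ∈ I
  · obtain ⟨u, α₀, hu, -, -⟩ := h ∅ (by simp)
    obtain ⟨α, hα⟩ := exists_forall_lt' u (isCompact_iUnion hcpt)
    exact ⟨u, α, hu, fun i _ y hy => (hα y (Set.mem_iUnion.2 ⟨i, hy⟩)).le,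
      fun i hi => absurd (hB i) hi⟩
  by_cases hC : ∀ i : Fin n, i ∉ I
  · obtain ⟨u, α₀, hu, -, -⟩ := h ∅ (by simp)
    obtain ⟨α, hα⟩ := exists_forall_gt' u (isCompact_iUnion hcpt)
    exact ⟨u, α, hu, fun i hi => absurd hi (hC i),
      fun i _ y hy => (hα y (Set.mem_iUnion.2 ⟨i, hy⟩)).le⟩
  push_neg at hB hC
  obtain ⟨i₁, hi₁⟩ := hB
  obtain ⟨i₀, hi₀⟩ := hC
  choose c hc using hint
  set F : Fin n → Set (V × ℝ) := fun i =>
    if i ∈ I then {p : V × ℝ | ∀ y ∈ K i, ⟪p.1, y⟫ ≤ p.2} ∩ {p : V × ℝ | ⟪p.1, c i⟫ < p.2}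
    else {p : V × ℝ | ∀ y ∈ K i, p.2 ≤ ⟪p.1, y⟫} ∩ {p : V × ℝ | p.2 < ⟪p.1, c i⟫} with hF
  have hFc : ∀ i ∈ (Finset.univ : Finset (Fin n)), Convex ℝ (F i) := by
    intro i _
    by_cases hi : i ∈ I
    · rw [hF]; simp only [if_pos hi]
      refine Convex.inter ?_ (convex_lt' (c i))
      have he : {p : V × ℝ | ∀ y ∈ K i, ⟪p.1, y⟫ ≤ p.2}
          = ⋂ y ∈ K i, {p : V × ℝ | ⟪p.1, y⟫ ≤ p.2} := by ext p; simp
      rw [he]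
      exact convex_iInter₂ fun y _ => convex_le' y
    · rw [hF]; simp only [if_neg hi]
      refine Convex.inter ?_ (convex_gt' (c i))
      have he : {p : V × ℝ | ∀ y ∈ K i, p.2 ≤ ⟪p.1, y⟫}
          = ⋂ y ∈ K i, {p : V × ℝ | p.2 ≤ ⟪p.1, y⟫} := by ext p; simp
      rw [he]
      exact convex_iInter₂ fun y _ => convex_ge' y
  have hFi : ∀ J ⊆ Finset.univ, J.card ≤ Module.finrank ℝ (V × ℝ) + 1 →
      (⋂ i ∈ J, F i).Nonempty := by
    intro J _ hJ
    rw [finrank_VR] at hJ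
    obtain ⟨u, α, hu, h1, h2⟩ := h J (by omega)
    refine ⟨(u, α), Set.mem_biInter fun i hi => ?_⟩
    by_cases hiI : i ∈ I
    · have h1' : ∀ y ∈ K i, ⟪u, y⟫ ≤ α := h1 i (Finset.mem_inter.2 ⟨hiI, hi⟩)
      rw [hF]; simp only [if_pos hiI]
      exact ⟨h1', inner_lt_of_mem_interior hu (hc i) h1'⟩
    · have h2' : ∀ y ∈ K i, α ≤ ⟪u, y⟫ := h2 i (Finset.mem_sdiff.2 ⟨hi, hiI⟩)
      rw [hF]; simp only [if_neg hiI]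
      exact ⟨h2', lt_inner_of_mem_interior hu (hc i) h2'⟩
  obtain ⟨p, hp⟩ := Convex.helly_theorem' hFc hFi
  have hmem : ∀ i, p ∈ F i := fun i => Set.mem_iInter₂.1 hp i (Finset.mem_univ i)
  have h1 : ∀ i ∈ I, (∀ y ∈ K i, ⟪p.1, y⟫ ≤ p.2) ∧ ⟪p.1, c i⟫ < p.2 := by
    intro i hi
    have := hmem i
    rw [hF] at this; simpa [if_pos hi] using this
  have h2 : ∀ i ∉ I, (∀ y ∈ K i, p.2 ≤ ⟪p.1, y⟫) ∧ p.2 < ⟪p.1, c i⟫ := by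
    intro i hi
    have := hmem i
    rw [hF] at this; simpa [if_neg hi] using this
  refine ⟨p.1, p.2, ?_, fun i hi => (h1 i hi).1, fun i hi => (h2 i hi).1⟩
  intro h0
  have a := (h1 i₀ hi₀).2
  have b := (h2 i₁ hi₁).2
  rw [h0, inner_zero_left] at a b
  linarith

end Aux

/-- **A Kirchberger-type theorem for families of convex bodies.**
Let `ℱ = {K₁, …, Kₙ}` be a family of convex bodies in `ℝ^d`, partitioned into
`ℱ₁` (indices in `I`) and `ℱ₂` (indices outside `I`). Then `⋃ℱ₁` can be strictly
separated from `⋃ℱ₂` by a hyperplane iff for every subfamily `𝒢` of cardinality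
at most `d+2`, `⋃(ℱ₁ ∩ 𝒢)` can be strictly separated from `⋃(ℱ₂ ∩ 𝒢)` by a
hyperplane; and the same holds for non-strict separation. -/
theorem stmt_8 (d n : ℕ) (K : Fin n → Set (EuclideanSpace ℝ (Fin d)))
    (hconv : ∀ i, Convex ℝ (K i)) (hcpt : ∀ i, IsCompact (K i))
    (hint : ∀ i, (interior (K i)).Nonempty)
    (I : Finset (Fin n)) :
    ((∃ (u : EuclideanSpace ℝ (Fin d)) (α : ℝ), u ≠ 0 ∧
        (∀ i ∈ I, ∀ y ∈ K i, ⟪u, y⟫ < α) ∧ (∀ i ∉ I, ∀ y ∈ K i, α < ⟪u, y⟫)) ↔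
      (∀ G : Finset (Fin n), G.card ≤ d + 2 →
        ∃ (u : EuclideanSpace ℝ (Fin d)) (α : ℝ), u ≠ 0 ∧
          (∀ i ∈ I ∩ G, ∀ y ∈ K i, ⟪u, y⟫ < α) ∧
          (∀ i ∈ G \ I, ∀ y ∈ K i, α < ⟪u, y⟫))) ∧
    ((∃ (u : EuclideanSpace ℝ (Fin d)) (α : ℝ), u ≠ 0 ∧
        (∀ i ∈ I, ∀ y ∈ K i, ⟪u, y⟫ ≤ α) ∧ (∀ i ∉ I, ∀ y ∈ K i, α ≤ ⟪u, y⟫)) ↔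
      (∀ G : Finset (Fin n), G.card ≤ d + 2 →
        ∃ (u : EuclideanSpace ℝ (Fin d)) (α : ℝ), u ≠ 0 ∧
          (∀ i ∈ I ∩ G, ∀ y ∈ K i, ⟪u, y⟫ ≤ α) ∧
          (∀ i ∈ G \ I, ∀ y ∈ K i, α ≤ ⟪u, y⟫))) := by
  constructor
  · constructor
    · rintro ⟨u, α, hu, h1, h2⟩ G _
      exact ⟨u, α, hu, fun i hi => h1 i (Finset.mem_inter.1 hi).1,
        fun i hi => h2 i (Finset.mem_sdiff.1 hi).2⟩
    · exact back_strict hcpt hint I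
  · constructor
    · rintro ⟨u, α, hu, h1, h2⟩ G _
      exact ⟨u, α, hu, fun i hi => h1 i (Finset.mem_inter.1 hi).1,
        fun i hi => h2 i (Finset.mem_sdiff.1 hi).2⟩
    · exact back_nonstrict hcpt hint I
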